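/- Let (σ̂_k)_{k≥0} be nonnegative reals, 0 < δ < 1, Ĉ₀ > 0, and θ̂ := 1 + (1−1/√2)². Suppose σ̂_0 ≤ Ĉ₀ and for all k ≥ 1: σ̂_k ≤ (∑_{ℓ=0}^{k−1} ((ln θ̂)^{k−ℓ}/(k−ℓ)!) δ^{k-\ell} σ̂_ℓ)^{1/2} σ̂_k^{1/2} + Ĉ₀^{1/2} δ^{k/2} σ̂_k^{1/2}. Then σ̂_k ≤ 2 Ĉ₀ δ^k for all k ≥ 0. -/

import Mathlib

open scoped BigOperators

private lemma stmt12_aux (A s y : ℝ) (hs : 0 ≤ s) (hss : s * s = y) (h : y ≤ A * s) :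
    y ≤ A * A := by
  nlinarith [mul_self_nonneg (A - s)]

/-- Induction argument from the Hermite summability proof: the recursive bound on
`σ̂_k` implies the geometric decay `σ̂_k ≤ 2 Ĉ₀ δ^k`. -/
theorem stmt12 (σ : ℕ → ℝ) (hσ : ∀ k, 0 ≤ σ k)
    (δ C₀ : ℝ) (hδ0 : 0 < δ) (hδ1 : δ < 1) (hC₀ : 0 < C₀)
    (h0 : σ 0 ≤ C₀)
    (hrec : ∀ k, 1 ≤ k →
      σ k ≤ Real.sqrt (∑ ℓ ∈ Finset.range k,
              Real.log (1 + (1 - 1 / Real.sqrt 2) ^ 2) ^ (k - ℓ) / ((k - ℓ).factorial : ℝ)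
                * δ ^ (k - ℓ) * σ ℓ) * Real.sqrt (σ k)
            + Real.sqrt C₀ * Real.sqrt (δ ^ k) * Real.sqrt (σ k)) :
    ∀ k, σ k ≤ 2 * C₀ * δ ^ k := by
  intro k
  induction k using Nat.strong_induction_on with
  | _ k ih =>
  rcases Nat.eq_zero_or_pos k with rfl | hk
  · simpa using h0.trans (by nlinarith)
  set x := Real.log (1 + (1 - 1 / Real.sqrt 2) ^ 2) with hxdef
  set c := 1 - 1 / Real.sqrt 2 with hcdef
  have hs2 : (1:ℝ) ≤ Real.sqrt 2 := by
    have := Real.sqrt_le_sqrt (show (1:ℝ) ≤ 2 by norm_num)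
    simpa using this
  have h22 : Real.sqrt 2 * Real.sqrt 2 = 2 := Real.mul_self_sqrt (by norm_num)
  have hc0 : 0 ≤ c := by
    have h1 : 1 / Real.sqrt 2 ≤ 1 := by
      rw [div_le_one (by linarith)]; exact hs2
    simp only [hcdef]; linarith
  have hθpos : (0:ℝ) < 1 + c ^ 2 := by positivity
  have hx0 : 0 ≤ x := Real.log_nonneg (by nlinarith [sq_nonneg c])
  have hexp : Real.exp x = 1 + c ^ 2 := Real.exp_log hθpos
  -- bound the factorial sum
  have hT : ∑ ℓ ∈ Finset.range k, x ^ (k - ℓ) / ((k - ℓ).factorial : ℝ) ≤ c ^ 2 := by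
    have h1 : ∑ ℓ ∈ Finset.range k, x ^ (k - ℓ) / ((k - ℓ).factorial : ℝ)
        = ∑ j ∈ Finset.range k, x ^ (j + 1) / ((j + 1).factorial : ℝ) := by
      rw [← Finset.sum_range_reflect]
      refine Finset.sum_congr rfl fun j hj => ?_
      have hj' : j < k := Finset.mem_range.mp hj
      have hkj : k - (k - 1 - j) = j + 1 := by omega
      rw [hkj]
    have h2 : ∑ i ∈ Finset.range (k + 1), x ^ i / (i.factorial : ℝ) ≤ Real.exp x :=
      Real.sum_le_exp_of_nonneg hx0 (k + 1)
    have h3 : ∑ i ∈ Finset.range (k + 1), x ^ i / (i.factorial : ℝ)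
        = (∑ j ∈ Finset.range k, x ^ (j + 1) / ((j + 1).factorial : ℝ)) + 1 := by
      rw [Finset.sum_range_succ']; simp
    rw [h1]
    rw [h3, hexp] at h2
    linarith
  -- bound the weighted sum
  have hS : ∑ ℓ ∈ Finset.range k, x ^ (k - ℓ) / ((k - ℓ).factorial : ℝ) * δ ^ (k - ℓ) * σ ℓ
      ≤ 2 * C₀ * δ ^ k * c ^ 2 := by
    calc ∑ ℓ ∈ Finset.range k, x ^ (k - ℓ) / ((k - ℓ).factorial : ℝ) * δ ^ (k - ℓ) * σ ℓ
        ≤ ∑ ℓ ∈ Finset.range k,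
            x ^ (k - ℓ) / ((k - ℓ).factorial : ℝ) * (2 * C₀ * δ ^ k) := by
          refine Finset.sum_le_sum fun ℓ hℓ => ?_
          have hℓk : ℓ < k := Finset.mem_range.mp hℓ
          have hih := ih ℓ hℓk
          have hp : δ ^ (k - ℓ) * δ ^ ℓ = δ ^ k := by
            rw [← pow_add]; congr 1; omega
          have hnn : (0:ℝ) ≤ x ^ (k - ℓ) / ((k - ℓ).factorial : ℝ) * δ ^ (k - ℓ) := by
            positivity
          calc x ^ (k - ℓ) / ((k - ℓ).factorial : ℝ) * δ ^ (k - ℓ) * σ ℓ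
              ≤ x ^ (k - ℓ) / ((k - ℓ).factorial : ℝ) * δ ^ (k - ℓ) * (2 * C₀ * δ ^ ℓ) :=
                mul_le_mul_of_nonneg_left hih hnn
            _ = x ^ (k - ℓ) / ((k - ℓ).factorial : ℝ) * (2 * C₀ * δ ^ k) := by
                rw [← hp]; ring
      _ = (∑ ℓ ∈ Finset.range k, x ^ (k - ℓ) / ((k - ℓ).factorial : ℝ)) * (2 * C₀ * δ ^ k) := by
          rw [Finset.sum_mul]
      _ ≤ c ^ 2 * (2 * C₀ * δ ^ k) :=
          mul_le_mul_of_nonneg_right hT (by positivity)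
      _ = 2 * C₀ * δ ^ k * c ^ 2 := by ring
  -- take square roots
  have hsqrtS : Real.sqrt (∑ ℓ ∈ Finset.range k,
        x ^ (k - ℓ) / ((k - ℓ).factorial : ℝ) * δ ^ (k - ℓ) * σ ℓ)
      ≤ Real.sqrt 2 * Real.sqrt C₀ * Real.sqrt (δ ^ k) * c := by
    have h1 := Real.sqrt_le_sqrt hS
    have h2 : Real.sqrt (2 * C₀ * δ ^ k * c ^ 2)
        = Real.sqrt 2 * Real.sqrt C₀ * Real.sqrt (δ ^ k) * c := by
      rw [Real.sqrt_mul (by positivity), Real.sqrt_sq hc0,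
        Real.sqrt_mul (by positivity), Real.sqrt_mul (by norm_num)]
    rw [h2] at h1
    exact h1
  have hrk := hrec k hk
  have hσk := hσ k
  have hsq : Real.sqrt (σ k) * Real.sqrt (σ k) = σ k := Real.mul_self_sqrt hσk
  have hσnn : 0 ≤ Real.sqrt (σ k) := Real.sqrt_nonneg _
  have hkey : σ k ≤ Real.sqrt 2 * Real.sqrt C₀ * Real.sqrt (δ ^ k) * Real.sqrt (σ k) := by
    have hco : Real.sqrt 2 * c + 1 = Real.sqrt 2 := by
      have hne : Real.sqrt 2 ≠ 0 := by positivity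
      have : Real.sqrt 2 * (1 / Real.sqrt 2) = 1 := by
        field_simp
      simp only [hcdef]
      nlinarith [this]
    have h5 := mul_le_mul_of_nonneg_right hsqrtS hσnn
    have h6 : σ k ≤ Real.sqrt 2 * Real.sqrt C₀ * Real.sqrt (δ ^ k) * c * Real.sqrt (σ k)
        + Real.sqrt C₀ * Real.sqrt (δ ^ k) * Real.sqrt (σ k) :=
      hrk.trans (add_le_add_left h5 _)
    have h7 : Real.sqrt 2 * Real.sqrt C₀ * Real.sqrt (δ ^ k) * c * Real.sqrt (σ k)
        + Real.sqrt C₀ * Real.sqrt (δ ^ k) * Real.sqrt (σ k)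
        = (Real.sqrt 2 * c + 1) * (Real.sqrt C₀ * Real.sqrt (δ ^ k)) * Real.sqrt (σ k) := by
      ring
    have h8 : (Real.sqrt 2 * c + 1) * (Real.sqrt C₀ * Real.sqrt (δ ^ k)) * Real.sqrt (σ k)
        = Real.sqrt 2 * Real.sqrt C₀ * Real.sqrt (δ ^ k) * Real.sqrt (σ k) := by
      rw [hco]; ring
    rw [h7, h8] at h6
    exact h6
  have hA2 : (Real.sqrt 2 * Real.sqrt C₀ * Real.sqrt (δ ^ k)) *
      (Real.sqrt 2 * Real.sqrt C₀ * Real.sqrt (δ ^ k)) = 2 * C₀ * δ ^ k := by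
    have h1 : Real.sqrt C₀ * Real.sqrt C₀ = C₀ := Real.mul_self_sqrt hC₀.le
    have h2 : Real.sqrt (δ ^ k) * Real.sqrt (δ ^ k) = δ ^ k :=
      Real.mul_self_sqrt (by positivity)
    calc (Real.sqrt 2 * Real.sqrt C₀ * Real.sqrt (δ ^ k)) *
        (Real.sqrt 2 * Real.sqrt C₀ * Real.sqrt (δ ^ k))
        = (Real.sqrt 2 * Real.sqrt 2) * ((Real.sqrt C₀ * Real.sqrt C₀) *
            (Real.sqrt (δ ^ k) * Real.sqrt (δ ^ k))) := by ring
      _ = 2 * C₀ * δ ^ k := by rw [h22, h1, h2]; ring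
  have := stmt12_aux (Real.sqrt 2 * Real.sqrt C₀ * Real.sqrt (δ ^ k)) (Real.sqrt (σ k)) (σ k)
    hσnn hsq hkey
  rw [hA2] at this
  exact this
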